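/- Let (E_i) be an orthonormal basis of Λ²V* of a Euclidean n-space, N = n(n−1)/2. Then −Σ_{i=1}^{N} (g^{p−1}ρ(E_i)/(p−1)!) ∘ (g^{p−1}ρ(E_i)/(p−1)!) = p(n−p) · gᵖ/p! as (p,p) double forms. -/

import Mathlib

noncomputable section

open Finset
open scoped RealInnerProductSpace

/-- Euclidean `n`-space. -/
abbrev Evec (n : ℕ) := EuclideanSpace ℝ (Fin n)

/-- The space of `(p,q)` double forms, modeled as real-valued kernels on pairs of tuples. -/
abbrev DF (n p q : ℕ) := (Fin p → Evec n) → (Fin q → Evec n) → ℝ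

/-- `p`-forms. -/
abbrev Form (n p : ℕ) := (Fin p → Evec n) → ℝ

/-- Mixed-degree forms (elements of the full exterior algebra). -/
abbrev MixedForm (n : ℕ) := ∀ p, Form n p

/-- Mixed-bidegree double forms. -/
abbrev MixedDF (n : ℕ) := ∀ p q, DF n p q

/-- The standard orthonormal basis. -/
def ebasis (n : ℕ) (i : Fin n) : Evec n := EuclideanSpace.single i 1

/-- The metric as a `(1,1)` double form. -/
def gdf (n : ℕ) : DF n 1 1 := fun x y => ⟪x 0, y 0⟫

/-- Alternating multilinear predicate for a `p`-form kernel. -/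
def IsAltML {n m : ℕ} (f : Form n m) : Prop :=
  (∀ (x : Fin m → Evec n) (i : Fin m) (c : ℝ) (a b : Evec n),
      f (Function.update x i (c • a + b)) =
        c * f (Function.update x i a) + f (Function.update x i b)) ∧
  (∀ (x : Fin m → Evec n) (i j : Fin m), i ≠ j → x i = x j → f x = 0)

/-- A kernel is a genuine double form iff it is alternating multilinear in both blocks. -/
def IsDF {n p q : ℕ} (ω : DF n p q) : Prop :=
  (∀ y, IsAltML (n := n) fun x => ω x y) ∧ (∀ x, IsAltML (ω x))

/-- Bilinearity of a function of two vectors. -/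
def IsBilin {n : ℕ} (h : Evec n → Evec n → ℝ) : Prop :=
  (∀ y, IsLinearMap ℝ fun x => h x y) ∧ (∀ x, IsLinearMap ℝ (h x))

/-- A 2-form: an alternating bilinear function. -/
def IsAltBilin {n : ℕ} (h : Evec n → Evec n → ℝ) : Prop :=
  IsBilin h ∧ ∀ x, h x x = 0

/-- Exterior product of double forms. -/
def wedge {n p q r s : ℕ} (ω : DF n p q) (η : DF n r s) : DF n (p + r) (q + s) :=
  fun x y =>
    (((p.factorial * r.factorial * q.factorial * s.factorial : ℕ) : ℝ))⁻¹ *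
      ∑ σ : Equiv.Perm (Fin (p + r)), ∑ τ : Equiv.Perm (Fin (q + s)),
        ((Equiv.Perm.sign σ : ℤ) : ℝ) * ((Equiv.Perm.sign τ : ℤ) : ℝ) *
          ω (fun i => x (σ (Fin.castAdd r i))) (fun j => y (τ (Fin.castAdd s j))) *
          η (fun i => x (σ (Fin.natAdd p i))) (fun j => y (τ (Fin.natAdd q j)))

/-- Exterior powers of the metric: `gᵖ`. -/
def gpow (n : ℕ) : (p : ℕ) → DF n p p
  | 0 => fun _ _ => 1
  | p + 1 => wedge (gpow n p) (gdf n)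

/-- The natural inner product of `(p,q)` double forms. -/
def innerDF {n p q : ℕ} (ω η : DF n p q) : ℝ :=
  (((p.factorial * q.factorial : ℕ) : ℝ))⁻¹ *
    ∑ f : Fin p → Fin n, ∑ h : Fin q → Fin n,
      ω (fun i => ebasis n (f i)) (fun j => ebasis n (h j)) *
        η (fun i => ebasis n (f i)) (fun j => ebasis n (h j))

/-- Composition product of double forms: `comp ω₁ ω₂ = ω₁ ∘ ω₂`. -/
def comp {n p q r : ℕ} (ω₁ : DF n p q) (ω₂ : DF n r p) : DF n r q :=
  fun x y =>
    ((p.factorial : ℝ))⁻¹ *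
      ∑ f : Fin p → Fin n,
        ω₂ x (fun i => ebasis n (f i)) * ω₁ (fun i => ebasis n (f i)) y

/-- Transpose of a double form. -/
def transp {n p q : ℕ} (ω : DF n p q) : DF n q p := fun x y => ω y x

/-- Inclusion of bilinear forms as `(1,1)` double forms (the map `ρ`). -/
def rho {n : ℕ} (h : Evec n → Evec n → ℝ) : DF n 1 1 := fun x y => h (x 0) (y 0)

/-- Inner product of 2-forms. -/
def inner2 {n : ℕ} (α β : Evec n → Evec n → ℝ) : ℝ :=
  (2:ℝ)⁻¹ * ∑ i, ∑ j, α (ebasis n i) (ebasis n j) * β (ebasis n i) (ebasis n j)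

/-- The curvature operator of a `(2,2)` double form, acting on 2-forms. -/
def curvOp {n : ℕ} (R : DF n 2 2) (θ : Evec n → Evec n → ℝ) : Evec n → Evec n → ℝ :=
  fun x y => (2:ℝ)⁻¹ * ∑ i, ∑ j,
    θ (ebasis n i) (ebasis n j) * R ![ebasis n i, ebasis n j] ![x, y]

/-- The first Bianchi identity for a `(2,2)` double form. -/
def FirstBianchi {n : ℕ} (R : DF n 2 2) : Prop :=
  ∀ x y z t : Evec n, R ![x, y] ![z, t] + R ![y, z] ![x, t] + R ![z, x] ![y, t] = 0

/-- The Ricci contraction `c R` of a `(2,2)` double form. -/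
def ricci {n : ℕ} (R : DF n 2 2) : DF n 1 1 :=
  fun x y => ∑ i, R ![ebasis n i, x 0] ![ebasis n i, y 0]

/-- Contraction of double forms. -/
def contr {n p q : ℕ} (ω : DF n (p + 1) (q + 1)) : DF n p q :=
  fun x y => ∑ i, ω (Fin.cons (ebasis n i) x) (Fin.cons (ebasis n i) y)

/-- Iterated contraction `cʳ`. -/
def contrIter {n : ℕ} : (r : ℕ) → {p q : ℕ} → DF n (p + r) (q + r) → DF n p q
  | 0, _, _, ω => ω
  | r + 1, _, _, ω => contrIter r (contr ω)

/-- The `(1,1)` double form associated to an endomorphism. -/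
def hdf {n : ℕ} (h : Evec n →ₗ[ℝ] Evec n) : DF n 1 1 := fun x y => ⟪h (x 0), y 0⟫

/-- Left exterior multiplication of a form by a covector `f`. -/
def wedgeC {n p : ℕ} (f : Evec n → ℝ) (α : Form n p) : Form n (p + 1) :=
  fun x => ∑ i : Fin (p + 1), (-1 : ℝ) ^ (i : ℕ) * f (x i) * α (x ∘ i.succAbove)

/-- Interior product of a form by a vector. -/
def iotaV {n : ℕ} : {p : ℕ} → Evec n → Form n p → Form n (p - 1)
  | 0, _, _ => 0
  | _ + 1, v, α => fun x => α (Fin.cons v x)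


/-- Interior product (non-truncating version). -/
def iotaV' {n p : ℕ} (v : Evec n) (α : Form n (p + 1)) : Form n p :=
  fun x => α (Fin.cons v x)

/-- Interior product in the first block (non-truncating version). -/
def iotaL' {n p q : ℕ} (v : Evec n) (ω : DF n (p + 1) q) : DF n p q :=
  fun x y => ω (Fin.cons v x) y

/-- Interior product in the second block (non-truncating version). -/
def iotaR' {n p q : ℕ} (v : Evec n) (ω : DF n p (q + 1)) : DF n p q :=
  fun x y => ω x (Fin.cons v y)

/-- Embedding a homogeneous form into mixed forms. -/
def embF {n : ℕ} (p : ℕ) (α : Form n p) : MixedForm n :=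
  fun d => if h : d = p then cast (show Form n p = Form n d by rw [h]) α else 0

/-- Left Clifford multiplication `v · α` of a homogeneous form. -/
def cliffLone {n p : ℕ} (v : Evec n) (α : Form n p) : MixedForm n :=
  embF (p + 1) (wedgeC (fun u => ⟪v, u⟫) α) - embF (p - 1) (iotaV v α)

/-- Right Clifford multiplication `α · v` of a homogeneous form. -/
def cliffRone {n p : ℕ} (v : Evec n) (α : Form n p) : MixedForm n :=
  (-1 : ℝ) ^ p • (embF (p + 1) (wedgeC (fun u => ⟪v, u⟫) α) + embF (p - 1) (iotaV v α))

/-- Left Clifford multiplication by a vector on mixed forms. -/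
def cliffLv {n : ℕ} (v : Evec n) (ω : MixedForm n) : MixedForm n :=
  fun d => match d with
  | 0 => -(iotaV' v (ω 1))
  | d + 1 => wedgeC (fun u => ⟪v, u⟫) (ω d) - iotaV' v (ω (d + 1 + 1))

/-- Right Clifford multiplication by a vector on mixed forms. -/
def cliffRv {n : ℕ} (v : Evec n) (ω : MixedForm n) : MixedForm n :=
  fun d => match d with
  | 0 => -(iotaV' v (ω 1))
  | d + 1 => (-1 : ℝ) ^ d • (wedgeC (fun u => ⟪v, u⟫) (ω d) + iotaV' v (ω (d + 1 + 1)))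

/-- Left Clifford multiplication by a 2-form on mixed forms. -/
def cliffL2 {n : ℕ} (α : Evec n → Evec n → ℝ) (ω : MixedForm n) : MixedForm n :=
  (2:ℝ)⁻¹ • ∑ i, ∑ j, α (ebasis n i) (ebasis n j) • cliffLv (ebasis n i) (cliffLv (ebasis n j) ω)

/-- Right Clifford multiplication by a 2-form on mixed forms. -/
def cliffR2 {n : ℕ} (α : Evec n → Evec n → ℝ) (ω : MixedForm n) : MixedForm n :=
  (2:ℝ)⁻¹ • ∑ i, ∑ j, α (ebasis n i) (ebasis n j) • cliffRv (ebasis n j) (cliffRv (ebasis n i) ω)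

/-- Interior product by a vector in the first block of a double form. -/
def iotaL {n : ℕ} : {p q : ℕ} → Evec n → DF n p q → DF n (p - 1) q
  | 0, _, _, _ => 0
  | _ + 1, _, v, ω => fun x y => ω (Fin.cons v x) y

/-- Interior product by a vector in the second block of a double form. -/
def iotaR {n : ℕ} : {p q : ℕ} → Evec n → DF n p q → DF n p (q - 1)
  | _, 0, _, _ => 0
  | _, _ + 1, v, ω => fun x y => ω x (Fin.cons v y)

/-- Exterior multiplication by a covector in the first block. -/
def wedgeCL {n p q : ℕ} (f : Evec n → ℝ) (ω : DF n p q) : DF n (p + 1) q :=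
  fun x y => ∑ i : Fin (p + 1), (-1 : ℝ) ^ (i : ℕ) * f (x i) * ω (x ∘ i.succAbove) y

/-- Exterior multiplication by a covector in the second block. -/
def wedgeCR {n p q : ℕ} (f : Evec n → ℝ) (ω : DF n p q) : DF n p (q + 1) :=
  fun x y => ∑ j : Fin (q + 1), (-1 : ℝ) ^ (j : ℕ) * f (y j) * ω x (y ∘ j.succAbove)

/-- Left Clifford multiplication by a vector on the first factor of mixed double forms. -/
def cliffLvL {n : ℕ} (v : Evec n) (Ω : MixedDF n) : MixedDF n :=
  fun p q => match p with
  | 0 => -(iotaL' v (Ω 1 q))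
  | p + 1 => wedgeCL (fun u => ⟪v, u⟫) (Ω p q) - iotaL' v (Ω (p + 1 + 1) q)

/-- Right Clifford multiplication by a vector on the first factor of mixed double forms. -/
def cliffRvL {n : ℕ} (v : Evec n) (Ω : MixedDF n) : MixedDF n :=
  fun p q => match p with
  | 0 => -(iotaL' v (Ω 1 q))
  | p + 1 => (-1 : ℝ) ^ p • (wedgeCL (fun u => ⟪v, u⟫) (Ω p q) + iotaL' v (Ω (p + 1 + 1) q))

/-- Left Clifford multiplication by a vector on the second factor of mixed double forms. -/
def cliffLvR {n : ℕ} (v : Evec n) (Ω : MixedDF n) : MixedDF n :=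
  fun p q => match q with
  | 0 => -(iotaR' v (Ω p 1))
  | q + 1 => wedgeCR (fun u => ⟪v, u⟫) (Ω p q) - iotaR' v (Ω p (q + 1 + 1))

/-- Right Clifford multiplication by a vector on the second factor of mixed double forms. -/
def cliffRvR {n : ℕ} (v : Evec n) (Ω : MixedDF n) : MixedDF n :=
  fun p q => match q with
  | 0 => -(iotaR' v (Ω p 1))
  | q + 1 => (-1 : ℝ) ^ q • (wedgeCR (fun u => ⟪v, u⟫) (Ω p q) + iotaR' v (Ω p (q + 1 + 1)))

/-- Clifford commutator with a covector (1-form) on the first factor. -/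
def adLone {n : ℕ} (v : Evec n) (Ω : MixedDF n) : MixedDF n :=
  cliffLvL v Ω - cliffRvL v Ω

/-- Clifford commutator with a covector (1-form) on the second factor. -/
def adRone {n : ℕ} (v : Evec n) (Ω : MixedDF n) : MixedDF n :=
  cliffLvR v Ω - cliffRvR v Ω

/-- The sharp product of a `(1,1)` double form with a mixed double form. -/
def sharp11 {n : ℕ} (h : Evec n → Evec n → ℝ) (Ω : MixedDF n) : MixedDF n :=
  ∑ i, ∑ j, h (ebasis n i) (ebasis n j) • adLone (ebasis n i) (adRone (ebasis n j) Ω)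

/-- Clifford commutator with the 2-form `v ∧ w` (for orthonormal `v, w`) on the first factor. -/
def adLpair {n : ℕ} (v w : Evec n) (Ω : MixedDF n) : MixedDF n :=
  cliffLvL v (cliffLvL w Ω) - cliffRvL w (cliffRvL v Ω)

/-- Clifford commutator with the 2-form `v ∧ w` (for orthonormal `v, w`) on the second factor. -/
def adRpair {n : ℕ} (v w : Evec n) (Ω : MixedDF n) : MixedDF n :=
  cliffLvR v (cliffLvR w Ω) - cliffRvR w (cliffRvR v Ω)

/-- Clifford commutator with a 2-form on the first factor. -/
def adL2 {n : ℕ} (α : Evec n → Evec n → ℝ) (Ω : MixedDF n) : MixedDF n :=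
  (2:ℝ)⁻¹ • ∑ i, ∑ j, α (ebasis n i) (ebasis n j) • adLpair (ebasis n i) (ebasis n j) Ω

/-- Clifford commutator with a 2-form on the second factor. -/
def adR2 {n : ℕ} (α : Evec n → Evec n → ℝ) (Ω : MixedDF n) : MixedDF n :=
  (2:ℝ)⁻¹ • ∑ i, ∑ j, α (ebasis n i) (ebasis n j) • adRpair (ebasis n i) (ebasis n j) Ω

/-- The sharp product of a `(2,2)` double form with a mixed double form. -/
def sharpR {n : ℕ} (R : DF n 2 2) (Ω : MixedDF n) : MixedDF n :=
  (4:ℝ)⁻¹ • ∑ i, ∑ j, ∑ k, ∑ l,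
    R ![ebasis n i, ebasis n j] ![ebasis n k, ebasis n l] •
      adLpair (ebasis n i) (ebasis n j) (adRpair (ebasis n k) (ebasis n l) Ω)

/-- Embedding of a homogeneous double form into mixed double forms. -/
def embDF {n : ℕ} (p q : ℕ) (ω : DF n p q) : MixedDF n :=
  fun p' q' =>
    if h : p' = p ∧ q' = q then cast (show DF n p q = DF n p' q' by rw [h.1, h.2]) ω else 0

/-- Interior product of a double form by a `(1,1)` double form. -/
def iotaH {n : ℕ} : {p q : ℕ} → (Evec n → Evec n → ℝ) → DF n p q → DF n (p - 1) (q - 1)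
  | 0, _, _, _ => 0
  | _ + 1, 0, _, _ => 0
  | _ + 1, _ + 1, h, ω => fun x y =>
      ∑ i, ∑ j, h (ebasis n i) (ebasis n j) *
        ω (Fin.cons (ebasis n i) x) (Fin.cons (ebasis n j) y)

/-- Contraction of a double form, defined in every bidegree. -/
def contrAny {n : ℕ} : {p q : ℕ} → DF n p q → DF n (p - 1) (q - 1)
  | 0, _, _ => 0
  | _ + 1, 0, _ => 0
  | _ + 1, _ + 1, ω => fun x y =>
      ∑ i, ω (Fin.cons (ebasis n i) x) (Fin.cons (ebasis n i) y)

/-- The first Bianchi sum `𝔖`. -/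
def bianchiT {n : ℕ} : {p q : ℕ} → DF n p q → DF n (p + 1) (q - 1)
  | _, 0, _ => 0
  | p, _ + 1, ω => fun x y =>
      ∑ i, ∑ a : Fin (p + 1), (-1 : ℝ) ^ (a : ℕ) * ⟪ebasis n i, x a⟫ *
        ω (x ∘ a.succAbove) (Fin.cons (ebasis n i) y)

/-- The adjoint first Bianchi sum `𝔖̃`. -/
def bianchiAdjT {n : ℕ} : {p q : ℕ} → DF n p q → DF n (p - 1) (q + 1)
  | 0, _, _ => 0
  | _ + 1, q, ω => fun x y =>
      ∑ i, ∑ b : Fin (q + 1), (-1 : ℝ) ^ (b : ℕ) * ⟪ebasis n i, y b⟫ *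
        ω (Fin.cons (ebasis n i) x) (y ∘ b.succAbove)

/-- `g^{q-1} ρ(α) / (q-1)!`, the derivation extension of a `(1,1)` double form, with the
convention that it vanishes for `q = 0` (i.e. `g⁻¹ = 0`). -/
def gPowRho {n : ℕ} : (q : ℕ) → (Evec n → Evec n → ℝ) → DF n q q
  | 0, _ => 0
  | q + 1, α => ((q.factorial : ℝ))⁻¹ • wedge (gpow n q) (rho α)

/-- A 2-form is expressible in terms of `m` covectors. -/
def ExprBy {n : ℕ} (E : Evec n → Evec n → ℝ) (m : ℕ) : Prop :=
  ∃ (w : Fin m → Evec n) (c : Fin m → Fin m → ℝ), ∀ x y,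
    E x y = ∑ a, ∑ b, c a b * (⟪w a, x⟫ * ⟪w b, y⟫ - ⟪w a, y⟫ * ⟪w b, x⟫)

theorem Equiv.Perm.inv_apply_self {α : Type*} (f : Equiv.Perm α) (x : α) : f⁻¹ (f x) = x :=
  f.symm_apply_apply x

theorem Equiv.Perm.apply_inv_self {α : Type*} (f : Equiv.Perm α) (x : α) : f (f⁻¹ x) = x :=
  f.apply_symm_apply x

namespace St19
open Equiv Equiv.Perm Finset

variable {n : ℕ}

/-- sign as a real number. -/
def sgn {p : ℕ} (σ : Perm (Fin p)) : ℝ := ((Perm.sign σ : ℤ) : ℝ)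

lemma sgn_mul {p : ℕ} (σ τ : Perm (Fin p)) : sgn (σ * τ) = sgn σ * sgn τ := by
  simp [sgn]

lemma sgn_inv {p : ℕ} (σ : Perm (Fin p)) : sgn σ⁻¹ = sgn σ := by
  simp [sgn]

lemma sgn_sq {p : ℕ} (σ : Perm (Fin p)) : sgn σ * sgn σ = 1 := by
  rcases Int.units_eq_one_or (Perm.sign σ) with h | h <;> simp [sgn, h]

lemma sgn_swap {p : ℕ} {a b : Fin p} (h : a ≠ b) : sgn (Equiv.swap a b) = -1 := by
  simp [sgn, Equiv.Perm.sign_swap h]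

lemma inner_eb_right (a : Evec n) (c : Fin n) : ⟪a, ebasis n c⟫ = a c := by
  simp [ebasis, EuclideanSpace.inner_single_right]

lemma inner_eb_left (a : Evec n) (c : Fin n) : ⟪ebasis n c, a⟫ = a c := by
  simp [ebasis, EuclideanSpace.inner_single_left]

lemma inner_coords (a b : Evec n) : ⟪a, b⟫ = ∑ c, a c * b c := by
  rw [PiLp.inner_apply]; exact Finset.sum_congr rfl fun c _ => by simp [mul_comm]

lemma parseval_rl (a b : Evec n) : ∑ c, ⟪a, ebasis n c⟫ * ⟪ebasis n c, b⟫ = ⟪a, b⟫ := by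
  simp only [inner_eb_right, inner_eb_left]; exact (inner_coords a b).symm

lemma parseval_rr (a b : Evec n) : ∑ c, ⟪a, ebasis n c⟫ * ⟪b, ebasis n c⟫ = ⟪a, b⟫ := by
  simp only [inner_eb_right]; exact (inner_coords a b).symm

lemma parseval_ll (a b : Evec n) : ∑ c, ⟪ebasis n c, a⟫ * ⟪ebasis n c, b⟫ = ⟪a, b⟫ := by
  simp only [inner_eb_left]; exact (inner_coords a b).symm

lemma ee_eq (a b : Fin n) : ⟪ebasis n a, ebasis n b⟫ = if a = b then (1:ℝ) else 0 := by
  rw [inner_eb_left]; simp [ebasis, EuclideanSpace.single_apply]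

end St19

namespace St19
open Equiv Equiv.Perm Finset

variable {n : ℕ}

/-- determinant-type double form -/
def DgK (n p : ℕ) : DF n p p :=
  fun x y => ∑ ρ : Perm (Fin p), sgn ρ * ∏ i, ⟪x i, y (ρ i)⟫

/-- derivation-extension double form -/
def DK (n p : ℕ) (h : Evec n → Evec n → ℝ) : DF n p p :=
  fun x y => ∑ ρ : Perm (Fin p), sgn ρ *
    ∑ k, h (x k) (y (ρ k)) * ∏ i ∈ univ.erase k, ⟪x i, y (ρ i)⟫

/-- extension of a permutation to `Fin (q+1)` fixing `last`. -/
def extL {q : ℕ} (π : Perm (Fin q)) : Perm (Fin (q + 1)) :=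
  finSuccEquivLast.symm.permCongr (Equiv.optionCongr π)

@[simp] lemma extL_castSucc {q : ℕ} (π : Perm (Fin q)) (i : Fin q) :
    extL π i.castSucc = (π i).castSucc := by
  simp [extL, Equiv.permCongr_apply]

@[simp] lemma extL_last {q : ℕ} (π : Perm (Fin q)) : extL π (Fin.last q) = Fin.last q := by
  simp [extL, Equiv.permCongr_apply]

@[simp] lemma sgn_extL {q : ℕ} (π : Perm (Fin q)) : sgn (extL π) = sgn π := by
  simp [sgn, extL, Equiv.Perm.sign_permCongr, Equiv.optionCongr_sign]

lemma extL_inv_castSucc {q : ℕ} (π : Perm (Fin q)) (i : Fin q) :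
    (extL π)⁻¹ (π i).castSucc = i.castSucc := by
  rw [← extL_castSucc π i, Perm.inv_apply_self]

lemma extL_inv_last {q : ℕ} (π : Perm (Fin q)) : (extL π)⁻¹ (Fin.last q) = Fin.last q := by
  conv_lhs => rw [← extL_last π, Perm.inv_apply_self]

/-- counting lemma -/
lemma sum_perm_last {q : ℕ} (F : Fin (q + 1) → ℝ) :
    ∑ σ : Perm (Fin (q + 1)), F (σ (Fin.last q)) = (q.factorial : ℝ) * ∑ k, F k := by
  have h1 : ∑ σ : Perm (Fin (q + 1)), F (σ (Fin.last q)) =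
      ∑ σ : Perm (Fin (q + 1)), F (σ 0) := by
    refine Fintype.sum_bijective (fun σ => σ * Equiv.swap 0 (Fin.last q))
      (Group.mulRight_bijective _) _ _ (fun σ => ?_)
    simp [Equiv.Perm.mul_apply]
  rw [h1]
  rw [← Equiv.sum_comp (Equiv.Perm.decomposeFin (n := q)).symm (fun σ => F (σ 0))]
  have h2 : ∀ z : Fin (q + 1) × Perm (Fin q),
      F ((Equiv.Perm.decomposeFin.symm z) 0) = F z.1 := by
    rintro ⟨k, τ⟩; rw [Equiv.Perm.decomposeFin_symm_apply_zero]
  rw [Fintype.sum_prod_type]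
  simp only [h2, Finset.sum_const, Finset.card_univ, Fintype.card_perm, Fintype.card_fin,
    nsmul_eq_mul, Finset.mul_sum, mul_comm]

/-- product over `σ ∘ castSucc` equals product over the complement of `σ last`. -/
lemma prod_comp_castSucc {q : ℕ} (σ : Perm (Fin (q + 1))) (V : Fin (q + 1) → ℝ) :
    (∏ i : Fin q, V (σ i.castSucc)) = ∏ m ∈ univ.erase (σ (Fin.last q)), V m := by
  refine Finset.prod_bij (fun i _ => σ i.castSucc) (fun a _ => ?_) (fun a _ b _ hab => ?_)
    (fun b hb => ?_) (fun a _ => rfl)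
  · simp only [Finset.mem_erase, Finset.mem_univ, and_true]
    exact fun hc => (Fin.castSucc_lt_last a).ne (σ.injective hc)
  · exact Fin.castSucc_injective q (σ.injective hab)
  · have hb' : σ.symm b ≠ Fin.last q := by
      intro hc
      apply (Finset.mem_erase.mp hb).1
      rw [← hc, Equiv.apply_symm_apply]
    refine ⟨(σ.symm b).castPred hb', Finset.mem_univ _, ?_⟩
    show σ (((σ.symm b).castPred hb').castSucc) = b
    rw [Fin.castSucc_castPred, Equiv.apply_symm_apply]
end St19

namespace St19
open Equiv Equiv.Perm Finset

variable {n : ℕ}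

lemma prod_two_erase {p : ℕ} {a b : Fin p} (h : a ≠ b) (V : Fin p → ℝ) :
    (∏ m, V m) = V a * V b * ∏ m ∈ (univ.erase a).erase b, V m := by
  rw [← Finset.mul_prod_erase univ V (Finset.mem_univ a),
    ← Finset.mul_prod_erase (univ.erase a) V
      (Finset.mem_erase.mpr ⟨h.symm, Finset.mem_univ b⟩), mul_assoc]

/-- reindex a product over an erased set along a permutation -/
lemma prod_erase_perm {p : ℕ} (σ : Perm (Fin p)) (k : Fin p) (H : Fin p → ℝ) :
    (∏ i ∈ univ.erase k, H (σ i)) = ∏ m ∈ univ.erase (σ k), H m := by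
  refine Finset.prod_bij (fun i _ => σ i) (fun a ha => ?_) (fun a _ b _ hab => σ.injective hab)
    (fun b hb => ?_) (fun a _ => rfl)
  · simp only [Finset.mem_erase, Finset.mem_univ, and_true] at ha ⊢
    exact fun hc => ha (σ.injective hc)
  · simp only [Finset.mem_erase, Finset.mem_univ, and_true] at hb ⊢
    refine ⟨σ.symm b, fun hc => hb ?_, Equiv.apply_symm_apply σ b⟩
    rw [← hc, Equiv.apply_symm_apply]

/-- reindex a product over a doubly erased set along a permutation -/
lemma prod_erase2_perm {p : ℕ} (σ : Perm (Fin p)) (k l : Fin p) (H : Fin p → ℝ) :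
    (∏ i ∈ (univ.erase k).erase l, H (σ i)) = ∏ m ∈ (univ.erase (σ k)).erase (σ l), H m := by
  refine Finset.prod_bij (fun i _ => σ i) (fun a ha => ?_) (fun a _ b _ hab => σ.injective hab)
    (fun b hb => ?_) (fun a _ => rfl)
  · simp only [Finset.mem_erase, Finset.mem_univ, and_true] at ha ⊢
    exact ⟨fun hc => ha.1 (σ.injective hc), fun hc => ha.2 (σ.injective hc)⟩
  · simp only [Finset.mem_erase, Finset.mem_univ, and_true] at hb ⊢
    refine ⟨σ.symm b, ⟨fun hc => hb.1 ?_, fun hc => hb.2 ?_⟩, Equiv.apply_symm_apply σ b⟩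
    · rw [← hc, Equiv.apply_symm_apply]
    · rw [← hc, Equiv.apply_symm_apply]

/-- factorization of a sum over functions of a product over coordinates -/
lemma sum_fun_prod {p : ℕ} (w : Fin p → Fin n → ℝ) :
    ∑ f : Fin p → Fin n, ∏ m, w m (f m) = ∏ m, ∑ c, w m c := by
  rw [Finset.prod_univ_sum]
  rw [Fintype.piFinset_univ]

/-- absorb an inner permutation sum -/
lemma absorb {q : ℕ} (A : Fin q → Fin (q + 1) → ℝ) (B : Fin (q + 1) → ℝ) :
    ∑ τ : Perm (Fin (q + 1)), sgn τ *
        (∑ π : Perm (Fin q), sgn π * ∏ i, A i (τ ((π i).castSucc))) * B (τ (Fin.last q))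
      = (q.factorial : ℝ) *
        ∑ τ : Perm (Fin (q + 1)), sgn τ * (∏ i, A i (τ i.castSucc)) * B (τ (Fin.last q)) := by
  have key : ∀ π : Perm (Fin q),
      ∑ τ : Perm (Fin (q + 1)),
        sgn τ * sgn π * (∏ i, A i (τ ((π i).castSucc))) * B (τ (Fin.last q))
      = ∑ τ : Perm (Fin (q + 1)), sgn τ * (∏ i, A i (τ i.castSucc)) * B (τ (Fin.last q)) := by
    intro π
    refine (Fintype.sum_bijective (fun τ => τ * (extL π)⁻¹) (Group.mulRight_bijective _)
      _ _ (fun τ => ?_)).symm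
    have h1 : ∀ i, (τ * (extL π)⁻¹) ((π i).castSucc) = τ i.castSucc := by
      intro i; simp only [Perm.mul_apply, extL_inv_castSucc]
    have h2 : (τ * (extL π)⁻¹) (Fin.last q) = τ (Fin.last q) := by
      simp only [Perm.mul_apply, extL_inv_last]
    have h3 : sgn (τ * (extL π)⁻¹) * sgn π = sgn τ := by
      rw [sgn_mul, sgn_inv, sgn_extL, mul_assoc, sgn_sq, mul_one]
    simp only [h1, h2, h3]
  calc ∑ τ : Perm (Fin (q + 1)), sgn τ *
        (∑ π : Perm (Fin q), sgn π * ∏ i, A i (τ ((π i).castSucc))) * B (τ (Fin.last q))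
      = ∑ τ : Perm (Fin (q + 1)), ∑ π : Perm (Fin q),
          sgn τ * sgn π * (∏ i, A i (τ ((π i).castSucc))) * B (τ (Fin.last q)) := by
        refine Finset.sum_congr rfl fun τ _ => ?_
        rw [Finset.mul_sum, Finset.sum_mul]
        refine Finset.sum_congr rfl fun π _ => by ring
    _ = ∑ π : Perm (Fin q), ∑ τ : Perm (Fin (q + 1)),
          sgn τ * sgn π * (∏ i, A i (τ ((π i).castSucc))) * B (τ (Fin.last q)) :=
        Finset.sum_comm
    _ = ∑ π : Perm (Fin q),
          ∑ τ : Perm (Fin (q + 1)), sgn τ * (∏ i, A i (τ i.castSucc)) * B (τ (Fin.last q)) :=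
        Finset.sum_congr rfl fun π _ => key π
    _ = (q.factorial : ℝ) *
          ∑ τ : Perm (Fin (q + 1)), sgn τ * (∏ i, A i (τ i.castSucc)) * B (τ (Fin.last q)) := by
        rw [Finset.sum_const, Finset.card_univ, Fintype.card_perm, Fintype.card_fin,
          nsmul_eq_mul]

/-- collapse a double permutation sum -/
lemma collapse {q : ℕ} (u v : Fin (q + 1) → Evec n) (H : Evec n → Evec n → ℝ) :
    ∑ σ : Perm (Fin (q + 1)), ∑ τ : Perm (Fin (q + 1)), sgn σ * sgn τ *
        (∏ i : Fin q, ⟪u (σ i.castSucc), v (τ i.castSucc)⟫) *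
        H (u (σ (Fin.last q))) (v (τ (Fin.last q)))
      = (q.factorial : ℝ) * ∑ ρ : Perm (Fin (q + 1)), sgn ρ *
          ∑ k, H (u k) (v (ρ k)) * ∏ m ∈ univ.erase k, ⟪u m, v (ρ m)⟫ := by
  have key : ∀ σ : Perm (Fin (q + 1)),
      ∑ τ : Perm (Fin (q + 1)), sgn σ * sgn τ *
        (∏ i : Fin q, ⟪u (σ i.castSucc), v (τ i.castSucc)⟫) *
        H (u (σ (Fin.last q))) (v (τ (Fin.last q)))
      = ∑ ρ : Perm (Fin (q + 1)), sgn ρ *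
          (H (u (σ (Fin.last q))) (v (ρ (σ (Fin.last q)))) *
            ∏ m ∈ univ.erase (σ (Fin.last q)), ⟪u m, v (ρ m)⟫) := by
    intro σ
    refine (Fintype.sum_bijective (fun ρ => ρ * σ) (Group.mulRight_bijective σ) _ _
      fun ρ => ?_).symm
    have h3 : sgn σ * sgn (ρ * σ) = sgn ρ := by
      rw [sgn_mul, mul_comm (sgn ρ), ← mul_assoc, sgn_sq, one_mul]
    simp only [Perm.mul_apply]
    rw [← prod_comp_castSucc σ (fun m => ⟪u m, v (ρ m)⟫), ← h3]
    ring
  calc ∑ σ : Perm (Fin (q + 1)), ∑ τ : Perm (Fin (q + 1)), sgn σ * sgn τ *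
        (∏ i : Fin q, ⟪u (σ i.castSucc), v (τ i.castSucc)⟫) *
        H (u (σ (Fin.last q))) (v (τ (Fin.last q)))
      = ∑ σ : Perm (Fin (q + 1)), ∑ ρ : Perm (Fin (q + 1)), sgn ρ *
          (H (u (σ (Fin.last q))) (v (ρ (σ (Fin.last q)))) *
            ∏ m ∈ univ.erase (σ (Fin.last q)), ⟪u m, v (ρ m)⟫) :=
        Finset.sum_congr rfl fun σ _ => key σ
    _ = ∑ ρ : Perm (Fin (q + 1)), ∑ σ : Perm (Fin (q + 1)), sgn ρ *
          (H (u (σ (Fin.last q))) (v (ρ (σ (Fin.last q)))) *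
            ∏ m ∈ univ.erase (σ (Fin.last q)), ⟪u m, v (ρ m)⟫) := Finset.sum_comm
    _ = ∑ ρ : Perm (Fin (q + 1)), (q.factorial : ℝ) * ∑ k, sgn ρ *
          (H (u k) (v (ρ k)) * ∏ m ∈ univ.erase k, ⟪u m, v (ρ m)⟫) :=
        Finset.sum_congr rfl fun ρ _ => sum_perm_last
          (fun k => sgn ρ * (H (u k) (v (ρ k)) * ∏ m ∈ univ.erase k, ⟪u m, v (ρ m)⟫))
    _ = (q.factorial : ℝ) * ∑ ρ : Perm (Fin (q + 1)), sgn ρ *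
          ∑ k, H (u k) (v (ρ k)) * ∏ m ∈ univ.erase k, ⟪u m, v (ρ m)⟫ := by
        rw [← Finset.mul_sum]
        refine congrArg _ (Finset.sum_congr rfl fun ρ _ => (Finset.mul_sum _ _ _).symm)
end St19

namespace St19
open Equiv Equiv.Perm Finset

variable {n : ℕ}

lemma sgn_def {p : ℕ} (σ : Perm (Fin p)) : sgn σ = ((Perm.sign σ : ℤ) : ℝ) := rfl

lemma castAdd_one_eq {q : ℕ} : (Fin.castAdd 1 : Fin q → Fin (q + 1)) = Fin.castSucc := rfl

lemma natAdd_zero_last {q : ℕ} : Fin.natAdd q (0 : Fin 1) = Fin.last q := by ext; simp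

lemma wedge_master (q : ℕ) (h : Evec n → Evec n → ℝ)
    (hgp : ∀ u w : Fin q → Evec n, gpow n q u w = (q.factorial : ℝ) * DgK n q u w)
    (x y : Fin (q + 1) → Evec n) :
    wedge (gpow n q) (rho h) x y = (q.factorial : ℝ) *
      ∑ ρ : Perm (Fin (q + 1)), sgn ρ *
        ∑ k, h (x k) (y (ρ k)) * ∏ m ∈ univ.erase k, ⟪x m, y (ρ m)⟫ := by
  have hq0 : (q.factorial : ℝ) ≠ 0 := Nat.cast_ne_zero.mpr q.factorial_ne_zero
  have step : ∀ σ : Perm (Fin (q + 1)),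
      ∑ τ : Perm (Fin (q + 1)), sgn σ * sgn τ * ((q.factorial : ℝ) *
          ∑ π : Perm (Fin q), sgn π * ∏ i : Fin q, ⟪x (σ i.castSucc), y (τ ((π i).castSucc))⟫) *
        h (x (σ (Fin.last q))) (y (τ (Fin.last q)))
      = (q.factorial : ℝ) * (q.factorial : ℝ) *
        ∑ τ : Perm (Fin (q + 1)), sgn σ * sgn τ *
          (∏ i : Fin q, ⟪x (σ i.castSucc), y (τ i.castSucc)⟫) *
          h (x (σ (Fin.last q))) (y (τ (Fin.last q))) := by
    intro σ
    have habs := absorb (fun i m => ⟪x (σ i.castSucc), y m⟫)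
      (fun m => h (x (σ (Fin.last q))) (y m))
    calc ∑ τ : Perm (Fin (q + 1)), sgn σ * sgn τ * ((q.factorial : ℝ) *
          ∑ π : Perm (Fin q), sgn π * ∏ i : Fin q, ⟪x (σ i.castSucc), y (τ ((π i).castSucc))⟫) *
          h (x (σ (Fin.last q))) (y (τ (Fin.last q)))
        = (sgn σ * (q.factorial : ℝ)) * ∑ τ : Perm (Fin (q + 1)), sgn τ *
            (∑ π : Perm (Fin q), sgn π * ∏ i : Fin q, ⟪x (σ i.castSucc), y (τ ((π i).castSucc))⟫) *
            h (x (σ (Fin.last q))) (y (τ (Fin.last q))) := by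
          rw [Finset.mul_sum]
          exact Finset.sum_congr rfl fun τ _ => by ring
      _ = (sgn σ * (q.factorial : ℝ)) * ((q.factorial : ℝ) *
            ∑ τ : Perm (Fin (q + 1)), sgn τ *
              (∏ i : Fin q, ⟪x (σ i.castSucc), y (τ i.castSucc)⟫) *
              h (x (σ (Fin.last q))) (y (τ (Fin.last q)))) := by rw [habs]
      _ = (q.factorial : ℝ) * (q.factorial : ℝ) *
            ∑ τ : Perm (Fin (q + 1)), sgn σ * sgn τ *
              (∏ i : Fin q, ⟪x (σ i.castSucc), y (τ i.castSucc)⟫) *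
              h (x (σ (Fin.last q))) (y (τ (Fin.last q))) := by
          rw [Finset.mul_sum, Finset.mul_sum, Finset.mul_sum]
          exact Finset.sum_congr rfl fun τ _ => by ring
  have e0 : wedge (gpow n q) (rho h) x y
      = ((q.factorial : ℝ) * (q.factorial : ℝ))⁻¹ *
        ∑ σ : Perm (Fin (q + 1)), ∑ τ : Perm (Fin (q + 1)),
          sgn σ * sgn τ * ((q.factorial : ℝ) *
            ∑ π : Perm (Fin q), sgn π * ∏ i : Fin q, ⟪x (σ i.castSucc), y (τ ((π i).castSucc))⟫) *
          h (x (σ (Fin.last q))) (y (τ (Fin.last q))) := by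
    unfold wedge rho
    have hpre : ((q.factorial * Nat.factorial 1 * q.factorial * Nat.factorial 1 : ℕ) : ℝ)⁻¹
        = ((q.factorial : ℝ) * (q.factorial : ℝ))⁻¹ := by
      norm_num [Nat.factorial_one]
    rw [hpre]
    refine congrArg _ (Finset.sum_congr rfl fun σ _ => Finset.sum_congr rfl fun τ _ => ?_)
    rw [hgp]
    rfl
  rw [e0]
  have e1 : ∑ σ : Perm (Fin (q + 1)), ∑ τ : Perm (Fin (q + 1)),
        sgn σ * sgn τ * ((q.factorial : ℝ) *
          ∑ π : Perm (Fin q), sgn π * ∏ i : Fin q, ⟪x (σ i.castSucc), y (τ ((π i).castSucc))⟫) *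
        h (x (σ (Fin.last q))) (y (τ (Fin.last q)))
      = ((q.factorial : ℝ) * (q.factorial : ℝ)) *
        ∑ σ : Perm (Fin (q + 1)), ∑ τ : Perm (Fin (q + 1)),
          sgn σ * sgn τ * (∏ i : Fin q, ⟪x (σ i.castSucc), y (τ i.castSucc)⟫) *
          h (x (σ (Fin.last q))) (y (τ (Fin.last q))) := by
    rw [Finset.mul_sum]
    exact Finset.sum_congr rfl fun σ _ => step σ
  rw [e1, inv_mul_cancel_left₀ (by positivity)]
  exact collapse x y h

lemma gpow_eq : ∀ (p : ℕ) (x y : Fin p → Evec n),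
    gpow n p x y = (p.factorial : ℝ) * DgK n p x y := by
  intro p
  induction p with
  | zero =>
    intro x y
    simp [gpow, DgK, sgn]
  | succ q IH =>
    intro x y
    show wedge (gpow n q) (gdf n) x y = _
    have hgdf : gdf n = rho (fun a b : Evec n => ⟪a, b⟫) := rfl
    rw [hgdf, wedge_master q _ (fun u w => IH u w)]
    have hk : ∀ ρ : Perm (Fin (q + 1)),
        ∑ k, ⟪x k, y (ρ k)⟫ * ∏ m ∈ univ.erase k, ⟪x m, y (ρ m)⟫
          = ((q + 1 : ℕ) : ℝ) * ∏ m, ⟪x m, y (ρ m)⟫ := by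
      intro ρ
      rw [Finset.sum_congr rfl fun k _ => Finset.mul_prod_erase univ (fun m => ⟪x m, y (ρ m)⟫) (Finset.mem_univ k),
        Finset.sum_const, Finset.card_univ, Fintype.card_fin, nsmul_eq_mul]
    simp only [hk, DgK]
    rw [Finset.mul_sum, Finset.mul_sum]
    refine Finset.sum_congr rfl fun ρ _ => ?_
    rw [Nat.factorial_succ]
    push_cast
    ring

lemma gPowRho_eq (p : ℕ) (h : Evec n → Evec n → ℝ) (x y : Fin p → Evec n) :
    gPowRho p h x y = DK n p h x y := by
  match p with
  | 0 =>
    show (0 : DF n 0 0) x y = _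
    simp [DK]
  | q + 1 =>
    show (((q.factorial : ℝ))⁻¹ • wedge (gpow n q) (rho h)) x y = _
    simp only [Pi.smul_apply, smul_eq_mul]
    rw [wedge_master q h (fun u w => gpow_eq q u w),
      inv_mul_cancel_left₀ (by positivity : (q.factorial : ℝ) ≠ 0)]
    rfl

end St19

namespace St19
open Equiv Equiv.Perm Finset

variable {n : ℕ}

lemma eb_repr (v : Evec n) : ∑ i, v i • ebasis n i = v := by
  have h := (EuclideanSpace.basisFun (Fin n) ℝ).sum_repr v
  simpa [ebasis, EuclideanSpace.basisFun_repr, EuclideanSpace.basisFun_apply] using h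

lemma bilin_expand {β : Evec n → Evec n → ℝ} (hβ : IsBilin β) (x y : Evec n) :
    β x y = ∑ i, ∑ j, x i * y j * β (ebasis n i) (ebasis n j) := by
  have h1 : β x y = ∑ i, x i * β (ebasis n i) y := by
    let L : Evec n →ₗ[ℝ] ℝ := IsLinearMap.mk' (fun u => β u y) (hβ.1 y)
    have : β x y = L x := rfl
    rw [this, ← eb_repr x, map_sum]
    simp only [map_smul, smul_eq_mul]
    rw [eb_repr x]
    rfl
  rw [h1]
  refine Finset.sum_congr rfl fun i _ => ?_
  have h2 : β (ebasis n i) y = ∑ j, y j * β (ebasis n i) (ebasis n j) := by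
    let L : Evec n →ₗ[ℝ] ℝ := IsLinearMap.mk' (β (ebasis n i)) (hβ.2 (ebasis n i))
    have : β (ebasis n i) y = L y := rfl
    rw [this, ← eb_repr y, map_sum]
    simp only [map_smul, smul_eq_mul]
    rw [eb_repr y]
    rfl
  rw [h2, Finset.mul_sum]
  exact Finset.sum_congr rfl fun j _ => by ring

lemma alt_antisymm {β : Evec n → Evec n → ℝ} (hβ : IsAltBilin β) (x y : Evec n) :
    β y x = -β x y := by
  have h0 := hβ.2 (x + y)
  have hx : β (x + y) (x + y) = β x (x + y) + β y (x + y) :=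
    (hβ.1.1 (x + y)).map_add x y
  have hx2 : β x (x + y) = β x x + β x y := (hβ.1.2 x).map_add x y
  have hy2 : β y (x + y) = β y x + β y y := (hβ.1.2 y).map_add x y
  have := hβ.2 x
  have := hβ.2 y
  linarith [h0, hx, hx2, hy2, hβ.2 x, hβ.2 y]

lemma inner2_theta {β : Evec n → Evec n → ℝ} (hβ : IsAltBilin β) (x y : Evec n) :
    inner2 (fun u v : Evec n => ⟪x, u⟫ * ⟪y, v⟫ - ⟪x, v⟫ * ⟪y, u⟫) β = β x y := by
  unfold inner2
  have key : ∀ i j : Fin n,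
      (⟪x, ebasis n i⟫ * ⟪y, ebasis n j⟫ - ⟪x, ebasis n j⟫ * ⟪y, ebasis n i⟫) *
        β (ebasis n i) (ebasis n j)
      = x i * y j * β (ebasis n i) (ebasis n j) - x j * y i * β (ebasis n i) (ebasis n j) := by
    intro i j
    rw [inner_eb_right, inner_eb_right, inner_eb_right, inner_eb_right]
    ring
  simp only [key]
  rw [Finset.sum_congr rfl fun i _ => Finset.sum_sub_distrib _ _, Finset.sum_sub_distrib]
  have e1 : ∑ i, ∑ j, x i * y j * β (ebasis n i) (ebasis n j) = β x y := (bilin_expand hβ.1 x y).symm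
  have e2 : ∑ i, ∑ j, x j * y i * β (ebasis n i) (ebasis n j) = β y x := by
    rw [bilin_expand hβ.1 y x]
    exact Finset.sum_congr rfl fun i _ => Finset.sum_congr rfl fun j _ => by ring
  rw [e1, e2, alt_antisymm hβ x y]
  ring

lemma theta_altbilin (x y : Evec n) :
    IsAltBilin (fun u v : Evec n => ⟪x, u⟫ * ⟪y, v⟫ - ⟪x, v⟫ * ⟪y, u⟫) := by
  refine ⟨⟨fun v => ⟨fun a b => ?_, fun c a => ?_⟩, fun u => ⟨fun a b => ?_, fun c a => ?_⟩⟩,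
    fun u => by ring⟩ <;>
  · simp only [inner_add_right, inner_smul_right, smul_eq_mul]
    ring

/-- The reproducing identity for the orthonormal basis of 2-forms. -/
lemma star_sum {N : ℕ} (E : Fin N → (Evec n → Evec n → ℝ))
    (hE : ∀ α, IsAltBilin (E α))
    (hCompl : ∀ θ : Evec n → Evec n → ℝ, IsAltBilin θ →
      ∀ x y, θ x y = ∑ α, inner2 θ (E α) * E α x y)
    (a b c d : Evec n) :
    ∑ α, E α a b * E α c d = ⟪a, c⟫ * ⟪b, d⟫ - ⟪a, d⟫ * ⟪b, c⟫ := by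
  have h := hCompl _ (theta_altbilin a b) c d
  rw [show (∑ α, E α a b * E α c d)
      = ∑ α, inner2 (fun u v : Evec n => ⟪a, u⟫ * ⟪b, v⟫ - ⟪a, v⟫ * ⟪b, u⟫) (E α) * E α c d from
    Finset.sum_congr rfl fun α _ => by rw [inner2_theta (hE α) a b]]
  exact h.symm

end St19

namespace St19
open Equiv Equiv.Perm Finset

variable {n : ℕ}

lemma sum_mul_delta (g : Fin n → ℝ) (c : Fin n) :
    ∑ d, g d * (if d = c then (1:ℝ) else 0) = g c := by
  rw [Finset.sum_eq_single c] <;> simp +contextual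

lemma sum_delta_mul (g : Fin n → ℝ) (c : Fin n) :
    ∑ d, (if d = c then (1:ℝ) else 0) * g d = g c := by
  rw [Finset.sum_eq_single c] <;> simp +contextual

lemma ee_sum (a b : Fin n) :
    ⟪ebasis n a, ebasis n b⟫ =
      ∑ c, (if a = c then (1:ℝ) else 0) * (if b = c then (1:ℝ) else 0) := by
  rw [ee_eq]
  rw [Finset.sum_eq_single a] <;> simp +contextual [eq_comm]

section cases

variable {p : ℕ} (x y : Fin p → Evec n) (σ τ : Perm (Fin p)) (k l : Fin p)

/-- reindexed first product -/
lemma P_reindex (f : Fin p → Fin n) :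
    (∏ i ∈ univ.erase k, ⟪x i, ebasis n (f (σ i))⟫)
      = ∏ m ∈ univ.erase (σ k), ⟪x (σ⁻¹ m), ebasis n (f m)⟫ := by
  rw [← prod_erase_perm σ k (fun m => ⟪x (σ⁻¹ m), ebasis n (f m)⟫)]
  exact Finset.prod_congr rfl fun i _ => by rw [Perm.inv_apply_self]

lemma caseA1 :
    ∑ f : Fin p → Fin n,
      (⟪x k, ebasis n (f (σ k))⟫ * ⟪ebasis n (f (σ k)), y (τ (σ k))⟫) *
        ((∏ i ∈ univ.erase k, ⟪x i, ebasis n (f (σ i))⟫) *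
         (∏ j ∈ univ.erase (σ k), ⟪ebasis n (f j), y (τ j)⟫))
    = ∏ m, ⟪x (σ⁻¹ m), y (τ m)⟫ := by
  set w : Fin p → Fin n → ℝ := fun m c =>
    if m = σ k then ⟪x k, ebasis n c⟫ * ⟪ebasis n c, y (τ (σ k))⟫
    else ⟪x (σ⁻¹ m), ebasis n c⟫ * ⟪ebasis n c, y (τ m)⟫ with hw
  have hint : ∀ f : Fin p → Fin n,
      (⟪x k, ebasis n (f (σ k))⟫ * ⟪ebasis n (f (σ k)), y (τ (σ k))⟫) *
        ((∏ i ∈ univ.erase k, ⟪x i, ebasis n (f (σ i))⟫) *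
         (∏ j ∈ univ.erase (σ k), ⟪ebasis n (f j), y (τ j)⟫))
      = ∏ m, w m (f m) := by
    intro f
    rw [P_reindex x σ k f,
      ← Finset.mul_prod_erase univ (fun m => w m (f m)) (Finset.mem_univ (σ k))]
    have h1 : w (σ k) (f (σ k)) = ⟪x k, ebasis n (f (σ k))⟫ * ⟪ebasis n (f (σ k)), y (τ (σ k))⟫ := by
      rw [hw]; simp
    have h2 : ∏ m ∈ univ.erase (σ k), w m (f m)
        = ∏ m ∈ univ.erase (σ k), ⟪x (σ⁻¹ m), ebasis n (f m)⟫ * ⟪ebasis n (f m), y (τ m)⟫ :=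
      Finset.prod_congr rfl fun m hm => by
        rw [hw]; simp [(Finset.mem_erase.mp hm).1]
    rw [h1, h2, Finset.prod_mul_distrib]
  rw [Finset.sum_congr rfl fun f _ => hint f, sum_fun_prod]
  refine Finset.prod_congr rfl fun m _ => ?_
  by_cases hm : m = σ k
  · subst hm
    simp only [hw, if_pos rfl]
    rw [parseval_rl, Perm.inv_apply_self]
  · simp only [hw, if_neg hm]
    rw [parseval_rl]

lemma caseB1 :
    ∑ f : Fin p → Fin n,
      ⟪ebasis n (f (σ k)), ebasis n (f (σ k))⟫ *
        ((∏ i ∈ univ.erase k, ⟪x i, ebasis n (f (σ i))⟫) *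
         (∏ j ∈ univ.erase (σ k), ⟪ebasis n (f j), y (τ j)⟫))
    = (n:ℝ) * ∏ m ∈ univ.erase (σ k), ⟪x (σ⁻¹ m), y (τ m)⟫ := by
  set w : Fin p → Fin n → ℝ := fun m c =>
    if m = σ k then 1
    else ⟪x (σ⁻¹ m), ebasis n c⟫ * ⟪ebasis n c, y (τ m)⟫ with hw
  have hint : ∀ f : Fin p → Fin n,
      ⟪ebasis n (f (σ k)), ebasis n (f (σ k))⟫ *
        ((∏ i ∈ univ.erase k, ⟪x i, ebasis n (f (σ i))⟫) *
         (∏ j ∈ univ.erase (σ k), ⟪ebasis n (f j), y (τ j)⟫))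
      = ∏ m, w m (f m) := by
    intro f
    rw [P_reindex x σ k f,
      ← Finset.mul_prod_erase univ (fun m => w m (f m)) (Finset.mem_univ (σ k))]
    have h1 : w (σ k) (f (σ k)) = 1 := by rw [hw]; simp
    have h2 : ∏ m ∈ univ.erase (σ k), w m (f m)
        = ∏ m ∈ univ.erase (σ k), ⟪x (σ⁻¹ m), ebasis n (f m)⟫ * ⟪ebasis n (f m), y (τ m)⟫ :=
      Finset.prod_congr rfl fun m hm => by
        rw [hw]; simp [(Finset.mem_erase.mp hm).1]
    rw [h1, h2, Finset.prod_mul_distrib, ee_eq]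
    simp
  rw [Finset.sum_congr rfl fun f _ => hint f, sum_fun_prod,
    ← Finset.mul_prod_erase univ (fun m => ∑ c, w m c) (Finset.mem_univ (σ k))]
  have h1 : ∑ c, w (σ k) c = (n:ℝ) := by rw [hw]; simp
  rw [h1]
  refine congrArg _ (Finset.prod_congr rfl fun m hm => ?_)
  rw [hw]
  simp only [(Finset.mem_erase.mp hm).1, if_false]
  rw [parseval_rl]

lemma caseA2 (hl : l ≠ σ k) :
    ∑ f : Fin p → Fin n,
      (⟪x k, ebasis n (f l)⟫ * ⟪ebasis n (f (σ k)), y (τ l)⟫) *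
        ((∏ i ∈ univ.erase k, ⟪x i, ebasis n (f (σ i))⟫) *
         (∏ j ∈ univ.erase l, ⟪ebasis n (f j), y (τ j)⟫))
    = (⟪x k, x (σ⁻¹ l)⟫ * ⟪y (τ l), y (τ (σ k))⟫) *
        ∏ m ∈ (univ.erase (σ k)).erase l, ⟪x (σ⁻¹ m), y (τ m)⟫ := by
  have hls : σ k ≠ l := fun h => hl h.symm
  set w : Fin p → Fin n → ℝ := fun m c =>
    if m = l then ⟪x k, ebasis n c⟫ * ⟪x (σ⁻¹ m), ebasis n c⟫
    else if m = σ k then ⟪ebasis n c, y (τ l)⟫ * ⟪ebasis n c, y (τ m)⟫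
    else ⟪x (σ⁻¹ m), ebasis n c⟫ * ⟪ebasis n c, y (τ m)⟫ with hw
  have hint : ∀ f : Fin p → Fin n,
      (⟪x k, ebasis n (f l)⟫ * ⟪ebasis n (f (σ k)), y (τ l)⟫) *
        ((∏ i ∈ univ.erase k, ⟪x i, ebasis n (f (σ i))⟫) *
         (∏ j ∈ univ.erase l, ⟪ebasis n (f j), y (τ j)⟫))
      = ∏ m, w m (f m) := by
    intro f
    rw [P_reindex x σ k f, prod_two_erase hl.symm (fun m => w m (f m)),
      ← Finset.mul_prod_erase (univ.erase (σ k)) (fun m => ⟪x (σ⁻¹ m), ebasis n (f m)⟫)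
        (Finset.mem_erase.mpr ⟨hl, Finset.mem_univ l⟩),
      ← Finset.mul_prod_erase (univ.erase l) (fun m => ⟪ebasis n (f m), y (τ m)⟫)
        (Finset.mem_erase.mpr ⟨hls, Finset.mem_univ (σ k)⟩)]
    have h1 : w (σ k) (f (σ k)) = ⟪ebasis n (f (σ k)), y (τ l)⟫ * ⟪ebasis n (f (σ k)), y (τ (σ k))⟫ := by
      rw [hw]; simp [hls]
    have h2 : w l (f l) = ⟪x k, ebasis n (f l)⟫ * ⟪x (σ⁻¹ l), ebasis n (f l)⟫ := by
      rw [hw]; simp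
    have h3 : ∏ m ∈ (univ.erase (σ k)).erase l, w m (f m)
        = ∏ m ∈ (univ.erase (σ k)).erase l,
            ⟪x (σ⁻¹ m), ebasis n (f m)⟫ * ⟪ebasis n (f m), y (τ m)⟫ :=
      Finset.prod_congr rfl fun m hm => by
        have hm1 := (Finset.mem_erase.mp hm).1
        have hm2 := (Finset.mem_erase.mp (Finset.mem_erase.mp hm).2).1
        rw [hw]; simp [hm1, hm2]
    rw [h1, h2, h3, Finset.prod_mul_distrib, Finset.erase_right_comm (s := univ) (a := l) (b := σ k)]
    ring
  rw [Finset.sum_congr rfl fun f _ => hint f, sum_fun_prod,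
    prod_two_erase hl.symm (fun m => ∑ c, w m c)]
  have h1 : ∑ c, w (σ k) c = ⟪y (τ l), y (τ (σ k))⟫ := by
    rw [hw]; simp only [hls, if_false, if_pos rfl]
    exact parseval_ll (y (τ l)) (y (τ (σ k)))
  have h2 : ∑ c, w l c = ⟪x k, x (σ⁻¹ l)⟫ := by
    rw [hw]; simp only [if_pos rfl]
    exact parseval_rr (x k) (x (σ⁻¹ l))
  rw [h1, h2]
  have h3 : ∏ m ∈ (univ.erase (σ k)).erase l, ∑ c, w m c
      = ∏ m ∈ (univ.erase (σ k)).erase l, ⟪x (σ⁻¹ m), y (τ m)⟫ :=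
    Finset.prod_congr rfl fun m hm => by
      have hm1 := (Finset.mem_erase.mp hm).1
      have hm2 := (Finset.mem_erase.mp (Finset.mem_erase.mp hm).2).1
      rw [hw]; simp only [hm1, hm2, if_false]
      rw [parseval_rl]
  rw [h3]
  ring

lemma caseB2 (hl : l ≠ σ k) :
    ∑ f : Fin p → Fin n,
      ⟪ebasis n (f (σ k)), ebasis n (f l)⟫ *
        ((∏ i ∈ univ.erase k, ⟪x i, ebasis n (f (σ i))⟫) *
         (∏ j ∈ univ.erase l, ⟪ebasis n (f j), y (τ j)⟫))
    = ⟪x (σ⁻¹ l), y (τ (σ k))⟫ *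
        ∏ m ∈ (univ.erase (σ k)).erase l, ⟪x (σ⁻¹ m), y (τ m)⟫ := by
  have hls : σ k ≠ l := fun h => hl h.symm
  set w : Fin n → Fin p → Fin n → ℝ := fun c m d =>
    if m = l then ⟪x (σ⁻¹ m), ebasis n d⟫ * (if d = c then (1:ℝ) else 0)
    else if m = σ k then (if d = c then (1:ℝ) else 0) * ⟪ebasis n d, y (τ m)⟫
    else ⟪x (σ⁻¹ m), ebasis n d⟫ * ⟪ebasis n d, y (τ m)⟫ with hw
  have hint : ∀ f : Fin p → Fin n,
      ⟪ebasis n (f (σ k)), ebasis n (f l)⟫ *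
        ((∏ i ∈ univ.erase k, ⟪x i, ebasis n (f (σ i))⟫) *
         (∏ j ∈ univ.erase l, ⟪ebasis n (f j), y (τ j)⟫))
      = ∑ c, ∏ m, w c m (f m) := by
    intro f
    rw [P_reindex x σ k f, ee_sum, Finset.sum_mul]
    refine Finset.sum_congr rfl fun c _ => ?_
    rw [prod_two_erase hl.symm (fun m => w c m (f m)),
      ← Finset.mul_prod_erase (univ.erase (σ k)) (fun m => ⟪x (σ⁻¹ m), ebasis n (f m)⟫)
        (Finset.mem_erase.mpr ⟨hl, Finset.mem_univ l⟩),
      ← Finset.mul_prod_erase (univ.erase l) (fun m => ⟪ebasis n (f m), y (τ m)⟫)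
        (Finset.mem_erase.mpr ⟨hls, Finset.mem_univ (σ k)⟩)]
    have h1 : w c (σ k) (f (σ k)) = (if f (σ k) = c then (1:ℝ) else 0) * ⟪ebasis n (f (σ k)), y (τ (σ k))⟫ := by
      rw [hw]; simp [hls]
    have h2 : w c l (f l) = ⟪x (σ⁻¹ l), ebasis n (f l)⟫ * (if f l = c then (1:ℝ) else 0) := by
      rw [hw]; simp
    have h3 : ∏ m ∈ (univ.erase (σ k)).erase l, w c m (f m)
        = ∏ m ∈ (univ.erase (σ k)).erase l,
            ⟪x (σ⁻¹ m), ebasis n (f m)⟫ * ⟪ebasis n (f m), y (τ m)⟫ :=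
      Finset.prod_congr rfl fun m hm => by
        have hm1 := (Finset.mem_erase.mp hm).1
        have hm2 := (Finset.mem_erase.mp (Finset.mem_erase.mp hm).2).1
        rw [hw]; simp [hm1, hm2]
    rw [h1, h2, h3, Finset.prod_mul_distrib, Finset.erase_right_comm (s := univ) (a := l) (b := σ k)]
    ring
  rw [Finset.sum_congr rfl fun f _ => hint f, Finset.sum_comm]
  have hterm : ∀ c : Fin n, ∑ f : Fin p → Fin n, ∏ m, w c m (f m)
      = (⟪x (σ⁻¹ l), ebasis n c⟫ * ⟪ebasis n c, y (τ (σ k))⟫) *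
          ∏ m ∈ (univ.erase (σ k)).erase l, ⟪x (σ⁻¹ m), y (τ m)⟫ := by
    intro c
    rw [sum_fun_prod, prod_two_erase hl.symm (fun m => ∑ d, w c m d)]
    have h1 : ∑ d, w c (σ k) d = ⟪ebasis n c, y (τ (σ k))⟫ := by
      rw [hw]; simp only [hls, if_false, if_pos rfl]
      exact sum_delta_mul (fun d => ⟪ebasis n d, y (τ (σ k))⟫) c
    have h2 : ∑ d, w c l d = ⟪x (σ⁻¹ l), ebasis n c⟫ := by
      rw [hw]; simp only [if_pos rfl]
      exact sum_mul_delta (fun d => ⟪x (σ⁻¹ l), ebasis n d⟫) c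
    have h3 : ∏ m ∈ (univ.erase (σ k)).erase l, ∑ d, w c m d
        = ∏ m ∈ (univ.erase (σ k)).erase l, ⟪x (σ⁻¹ m), y (τ m)⟫ :=
      Finset.prod_congr rfl fun m hm => by
        have hm1 := (Finset.mem_erase.mp hm).1
        have hm2 := (Finset.mem_erase.mp (Finset.mem_erase.mp hm).2).1
        rw [hw]; simp only [hm1, hm2, if_false]
        rw [parseval_rl]
    rw [h1, h2, h3]
    ring
  rw [Finset.sum_congr rfl fun c _ => hterm c, ← Finset.sum_mul]
  rw [parseval_rl]

end cases

end St19

namespace St19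
open Equiv Equiv.Perm Finset

variable {n : ℕ}

lemma RED {p : ℕ} (x y : Fin p → Evec n) :
    ∑ σ : Perm (Fin p), ∑ τ : Perm (Fin p), sgn σ * sgn τ * ∏ m, ⟪x (σ⁻¹ m), y (τ m)⟫
      = (p.factorial : ℝ) * DgK n p x y := by
  have key : ∀ σ : Perm (Fin p),
      ∑ τ : Perm (Fin p), sgn σ * sgn τ * ∏ m, ⟪x (σ⁻¹ m), y (τ m)⟫ = DgK n p x y := by
    intro σ
    rw [DgK]
    refine (Fintype.sum_bijective (fun ρ => ρ * σ⁻¹) (Group.mulRight_bijective _) _ _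
      fun ρ => ?_).symm
    rw [← Equiv.prod_comp σ (fun m => ⟪x (σ⁻¹ m), y ((ρ * σ⁻¹) m)⟫)]
    simp only [Perm.mul_apply, Perm.inv_apply_self]
    have hs := sgn_sq σ
    rw [sgn_mul, sgn_inv]
    linear_combination (-(sgn ρ) * ∏ m : Fin p, ⟪x m, y (ρ m)⟫) * hs
  rw [Finset.sum_congr rfl fun σ _ => key σ, Finset.sum_const, Finset.card_univ,
    Fintype.card_perm, Fintype.card_fin, nsmul_eq_mul]

lemma tau_sum_B2 {p : ℕ} (x y : Fin p → Evec n) (σ : Perm (Fin p)) (k l : Fin p)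
    (hl : l ≠ σ k) :
    ∑ τ : Perm (Fin p), sgn σ * sgn τ * (⟪x k, y (τ l)⟫ * (⟪x (σ⁻¹ l), y (τ (σ k))⟫ *
        ∏ m ∈ (univ.erase (σ k)).erase l, ⟪x (σ⁻¹ m), y (τ m)⟫))
      = - DgK n p x y := by
  set a : Fin p := σ⁻¹ l with ha
  have hsa : σ a = l := by rw [ha, Perm.apply_inv_self]
  have hka : k ≠ a := by
    intro h
    apply hl
    rw [← hsa, h]
  set μ : Perm (Fin p) := σ * Equiv.swap k a with hμ
  have hμinv : ∀ m, μ⁻¹ m = Equiv.swap k a (σ⁻¹ m) := by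
    intro m
    rw [hμ, mul_inv_rev, Perm.mul_apply, Equiv.swap_inv]
  have hμ1 : μ⁻¹ l = k := by rw [hμinv, ← ha, Equiv.swap_apply_right]
  have hμ2 : μ⁻¹ (σ k) = a := by rw [hμinv, Perm.inv_apply_self, Equiv.swap_apply_left]
  have hμ3 : ∀ m, m ≠ σ k → m ≠ l → μ⁻¹ m = σ⁻¹ m := by
    intro m h1 h2
    rw [hμinv, Equiv.swap_apply_of_ne_of_ne]
    · intro h; apply h1; rw [← Perm.apply_inv_self σ m, h]
    · intro h; apply h2; rw [← Perm.apply_inv_self σ m, h, hsa]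
  have hsgnμ : sgn μ⁻¹ = - sgn σ := by
    rw [sgn_inv, hμ, sgn_mul, sgn_swap hka, mul_neg_one]
  rw [DgK, ← Finset.sum_neg_distrib]
  refine (Fintype.sum_bijective (fun ρ => ρ * μ⁻¹) (Group.mulRight_bijective _) _ _
    fun ρ => ?_).symm
  have e1 : (ρ * μ⁻¹) l = ρ k := by rw [Perm.mul_apply, hμ1]
  have e2 : (ρ * μ⁻¹) (σ k) = ρ a := by rw [Perm.mul_apply, hμ2]
  have e3 : ∏ m ∈ (univ.erase (σ k)).erase l, ⟪x (σ⁻¹ m), y ((ρ * μ⁻¹) m)⟫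
      = ∏ i ∈ (univ.erase k).erase a, ⟪x i, y (ρ i)⟫ := by
    rw [Finset.prod_congr rfl (fun m hm => ?_)]
    · have := prod_erase2_perm σ⁻¹ (σ k) l (fun i => ⟪x i, y (ρ i)⟫)
      rw [Perm.inv_apply_self] at this
      rw [← ha] at this
      exact this
    · have hm1 := (Finset.mem_erase.mp hm).1
      have hm2 := (Finset.mem_erase.mp (Finset.mem_erase.mp hm).2).1
      show ⟪x (σ⁻¹ m), y ((ρ * μ⁻¹) m)⟫ = ⟪x (σ⁻¹ m), y (ρ (σ⁻¹ m))⟫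
      rw [Perm.mul_apply, hμ3 m hm2 hm1]
  have esgn : sgn σ * sgn (ρ * μ⁻¹) = - sgn ρ := by
    rw [sgn_mul, hsgnμ, mul_comm (sgn ρ), ← mul_assoc]
    rw [show sgn σ * - sgn σ = -1 by rw [mul_neg, sgn_sq]]
    ring
  rw [e1, e2, e3, esgn, prod_two_erase hka (fun i => ⟪x i, y (ρ i)⟫)]
  ring

lemma part2A_zero {p : ℕ} (x y : Fin p → Evec n) (τ : Perm (Fin p)) :
    ∑ σ : Perm (Fin p), ∑ k, ∑ l ∈ univ.erase (σ k), sgn σ * sgn τ *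
      ((⟪x k, x (σ⁻¹ l)⟫ * ⟪y (τ l), y (τ (σ k))⟫) *
        ∏ m ∈ (univ.erase (σ k)).erase l, ⟪x (σ⁻¹ m), y (τ m)⟫)
    = 0 := by
  set F : Perm (Fin p) × Fin p × Fin p → ℝ := fun z =>
    sgn z.1 * sgn τ * ((⟪x z.2.1, x (z.1⁻¹ z.2.2)⟫ * ⟪y (τ z.2.2), y (τ (z.1 z.2.1))⟫) *
      ∏ m ∈ (univ.erase (z.1 z.2.1)).erase z.2.2, ⟪x (z.1⁻¹ m), y (τ m)⟫) with hF
  have step1 : ∑ σ : Perm (Fin p), ∑ k, ∑ l ∈ univ.erase (σ k), sgn σ * sgn τ *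
      ((⟪x k, x (σ⁻¹ l)⟫ * ⟪y (τ l), y (τ (σ k))⟫) *
        ∏ m ∈ (univ.erase (σ k)).erase l, ⟪x (σ⁻¹ m), y (τ m)⟫)
      = ∑ z ∈ univ.filter (fun z : Perm (Fin p) × Fin p × Fin p => z.2.2 ≠ z.1 z.2.1), F z := by
    rw [Finset.sum_filter, Fintype.sum_prod_type]
    refine Finset.sum_congr rfl fun σ _ => ?_
    rw [Fintype.sum_prod_type]
    refine Finset.sum_congr rfl fun k _ => ?_
    have herase : ∀ (f : Fin p → ℝ), ∑ l ∈ univ.erase (σ k), f l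
        = ∑ l, if l ≠ σ k then f l else 0 := by
      intro f
      rw [← Finset.filter_ne', Finset.sum_filter]
    rw [herase]
  rw [step1]
  refine Finset.sum_involution
    (fun z _ => (z.1 * Equiv.swap z.2.1 (z.1⁻¹ z.2.2), z.1⁻¹ z.2.2, z.2.2))
    (fun z hz => ?_) (fun z hz _ => ?_) (fun z hz => ?_) (fun z hz => ?_)
  · -- f z + f (g z) = 0
    obtain ⟨σ, k, l⟩ := z
    simp only [Finset.mem_filter, Finset.mem_univ, true_and] at hz
    set a : Fin p := σ⁻¹ l with ha
    have hsa : σ a = l := by rw [ha, Perm.apply_inv_self]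
    have hka : k ≠ a := fun h => hz (by rw [← hsa, h])
    set σ' : Perm (Fin p) := σ * Equiv.swap k a with hσ'
    have hinv : ∀ m, σ'⁻¹ m = Equiv.swap k a (σ⁻¹ m) := by
      intro m; rw [hσ', mul_inv_rev, Perm.mul_apply, Equiv.swap_inv]
    have h1 : σ' a = σ k := by rw [hσ', Perm.mul_apply, Equiv.swap_apply_right]
    have h2 : σ'⁻¹ l = k := by rw [hinv, ← ha, Equiv.swap_apply_right]
    have h3 : sgn σ' = - sgn σ := by rw [hσ', sgn_mul, sgn_swap hka, mul_neg_one]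
    have h4 : ∏ m ∈ (univ.erase (σ k)).erase l, ⟪x ((σ * Equiv.swap k a)⁻¹ m), y (τ m)⟫
        = ∏ m ∈ (univ.erase (σ k)).erase l, ⟪x (σ⁻¹ m), y (τ m)⟫ := by
      refine Finset.prod_congr rfl fun m hm => ?_
      have hm1 := (Finset.mem_erase.mp hm).1
      have hm2 := (Finset.mem_erase.mp (Finset.mem_erase.mp hm).2).1
      rw [mul_inv_rev, Perm.mul_apply, Equiv.swap_inv, Equiv.swap_apply_of_ne_of_ne]
      · intro h; apply hm2; rw [← Perm.apply_inv_self σ m, h]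
      · intro h; apply hm1; rw [← Perm.apply_inv_self σ m, h, hsa]
    simp only [hF]
    show sgn σ * sgn τ * ((⟪x k, x (σ⁻¹ l)⟫ * ⟪y (τ l), y (τ (σ k))⟫) * _)
        + sgn σ' * sgn τ * ((⟪x a, x (σ'⁻¹ l)⟫ * ⟪y (τ l), y (τ (σ' a))⟫) * _) = 0
    rw [h1, h2, h3, ← ha, h4, real_inner_comm (x a) (x k)]
    ring
  · -- g z ≠ z
    obtain ⟨σ, k, l⟩ := z
    simp only [Finset.mem_filter, Finset.mem_univ, true_and] at hz
    intro hcon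
    have h2 : σ⁻¹ l = k := congrArg (fun w => w.2.1) hcon
    exact hz (by rw [← h2, Perm.apply_inv_self])
  · -- membership
    obtain ⟨σ, k, l⟩ := z
    simp only [Finset.mem_filter, Finset.mem_univ, true_and] at hz ⊢
    show l ≠ (σ * Equiv.swap k (σ⁻¹ l)) (σ⁻¹ l)
    rw [Perm.mul_apply, Equiv.swap_apply_right]
    exact hz
  · -- involution
    obtain ⟨σ, k, l⟩ := z
    simp only [Finset.mem_filter, Finset.mem_univ, true_and] at hz
    set a : Fin p := σ⁻¹ l with ha
    have hsa : σ a = l := by rw [ha, Perm.apply_inv_self]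
    set σ' : Perm (Fin p) := σ * Equiv.swap k a with hσ'
    have hinv : σ'⁻¹ l = k := by
      rw [hσ', mul_inv_rev, Perm.mul_apply, Equiv.swap_inv, ← ha, Equiv.swap_apply_right]
    show (σ' * Equiv.swap a (σ'⁻¹ l), σ'⁻¹ l, l) = (σ, k, l)
    rw [hinv]
    refine Prod.ext ?_ rfl
    show σ' * Equiv.swap a k = σ
    rw [hσ', Equiv.swap_comm a k, mul_assoc, Equiv.swap_mul_self, mul_one]

end St19

namespace St19
open Equiv Equiv.Perm Finset

variable {n : ℕ}

lemma sum_rot6 {ι₁ ι₂ ι₃ ι₄ ι₅ ι₆ : Type*} [Fintype ι₁] [Fintype ι₂] [Fintype ι₃]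
    [Fintype ι₄] [Fintype ι₅] [Fintype ι₆] (W : ι₁ → ι₂ → ι₃ → ι₄ → ι₅ → ι₆ → ℝ) :
    ∑ a, ∑ b, ∑ c, ∑ d, ∑ e, ∑ g, W a b c d e g
      = ∑ b, ∑ c, ∑ d, ∑ e, ∑ g, ∑ a, W a b c d e g := by
  rw [Finset.sum_comm]; refine Finset.sum_congr rfl fun b _ => ?_
  rw [Finset.sum_comm]; refine Finset.sum_congr rfl fun c _ => ?_
  rw [Finset.sum_comm]; refine Finset.sum_congr rfl fun d _ => ?_
  rw [Finset.sum_comm]; refine Finset.sum_congr rfl fun e _ => ?_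
  exact Finset.sum_comm

lemma sum_rot5 {ι₁ ι₂ ι₃ ι₄ ι₅ : Type*} [Fintype ι₁] [Fintype ι₂] [Fintype ι₃]
    [Fintype ι₄] [Fintype ι₅] (W : ι₁ → ι₂ → ι₃ → ι₄ → ι₅ → ℝ) :
    ∑ a, ∑ b, ∑ c, ∑ d, ∑ e, W a b c d e
      = ∑ b, ∑ c, ∑ d, ∑ e, ∑ a, W a b c d e := by
  rw [Finset.sum_comm]; refine Finset.sum_congr rfl fun b _ => ?_
  rw [Finset.sum_comm]; refine Finset.sum_congr rfl fun c _ => ?_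
  rw [Finset.sum_comm]; refine Finset.sum_congr rfl fun d _ => ?_
  exact Finset.sum_comm

lemma main_sum {p N : ℕ} (E : Fin N → (Evec n → Evec n → ℝ))
    (hstar : ∀ a b c d : Evec n,
      ∑ α, E α a b * E α c d = ⟪a, c⟫ * ⟪b, d⟫ - ⟪a, d⟫ * ⟪b, c⟫)
    (x y : Fin p → Evec n) :
    ∑ α, ∑ f : Fin p → Fin n,
        DK n p (E α) x (fun i => ebasis n (f i)) * DK n p (E α) (fun i => ebasis n (f i)) y
      = ((p : ℝ) * (1 - (n : ℝ)) + (p : ℝ) * ((p - 1 : ℕ) : ℝ)) *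
          ((p.factorial : ℝ) * DgK n p x y) := by
  classical
  -- Step 1: expand the product of the two derivation kernels
  have hexp : ∀ (α : Fin N) (f : Fin p → Fin n),
      DK n p (E α) x (fun i => ebasis n (f i)) * DK n p (E α) (fun i => ebasis n (f i)) y
      = ∑ σ : Perm (Fin p), ∑ τ : Perm (Fin p), ∑ k, ∑ l,
          sgn σ * sgn τ *
            (E α (x k) (ebasis n (f (σ k))) * E α (ebasis n (f l)) (y (τ l))) *
            ((∏ i ∈ univ.erase k, ⟪x i, ebasis n (f (σ i))⟫) *
             (∏ j ∈ univ.erase l, ⟪ebasis n (f j), y (τ j)⟫)) := by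
    intro α f
    simp only [DK]
    rw [Finset.sum_mul_sum]
    refine Finset.sum_congr rfl fun σ _ => Finset.sum_congr rfl fun τ _ => ?_
    have e :
        (sgn σ * ∑ k, E α (x k) (ebasis n (f (σ k))) *
            ∏ i ∈ univ.erase k, ⟪x i, ebasis n (f (σ i))⟫) *
        (sgn τ * ∑ l, E α (ebasis n (f l)) (y (τ l)) *
            ∏ j ∈ univ.erase l, ⟪ebasis n (f j), y (τ j)⟫)
        = (∑ k, E α (x k) (ebasis n (f (σ k))) *
            ∏ i ∈ univ.erase k, ⟪x i, ebasis n (f (σ i))⟫) *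
          (∑ l, E α (ebasis n (f l)) (y (τ l)) *
            ∏ j ∈ univ.erase l, ⟪ebasis n (f j), y (τ j)⟫) * (sgn σ * sgn τ) := by ring
    rw [e, Finset.sum_mul_sum, Finset.sum_mul]
    refine Finset.sum_congr rfl fun k _ => ?_
    rw [Finset.sum_mul]
    refine Finset.sum_congr rfl fun l _ => ?_
    ring
  rw [Finset.sum_congr rfl fun α _ => Finset.sum_congr rfl fun f _ => hexp α f]
  -- Step 2: reorder the sums
  rw [sum_rot6 (fun (α : Fin N) (f : Fin p → Fin n) σ τ k l =>
      sgn σ * sgn τ *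
        (E α (x k) (ebasis n (f (σ k))) * E α (ebasis n (f l)) (y (τ l))) *
        ((∏ i ∈ univ.erase k, ⟪x i, ebasis n (f (σ i))⟫) *
         (∏ j ∈ univ.erase l, ⟪ebasis n (f j), y (τ j)⟫)))]
  rw [sum_rot5 (fun (f : Fin p → Fin n) σ τ k l => ∑ α,
      sgn σ * sgn τ *
        (E α (x k) (ebasis n (f (σ k))) * E α (ebasis n (f l)) (y (τ l))) *
        ((∏ i ∈ univ.erase k, ⟪x i, ebasis n (f (σ i))⟫) *
         (∏ j ∈ univ.erase l, ⟪ebasis n (f j), y (τ j)⟫)))]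
  -- Step 3: perform the α- and f-sums
  have hfa : ∀ (σ τ : Perm (Fin p)) (k l : Fin p),
      (∑ f : Fin p → Fin n, ∑ α,
        sgn σ * sgn τ *
          (E α (x k) (ebasis n (f (σ k))) * E α (ebasis n (f l)) (y (τ l))) *
          ((∏ i ∈ univ.erase k, ⟪x i, ebasis n (f (σ i))⟫) *
           (∏ j ∈ univ.erase l, ⟪ebasis n (f j), y (τ j)⟫)))
      = sgn σ * sgn τ * (∑ f : Fin p → Fin n,
            (⟪x k, ebasis n (f l)⟫ * ⟪ebasis n (f (σ k)), y (τ l)⟫) *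
            ((∏ i ∈ univ.erase k, ⟪x i, ebasis n (f (σ i))⟫) *
             (∏ j ∈ univ.erase l, ⟪ebasis n (f j), y (τ j)⟫)))
        - sgn σ * sgn τ * (⟪x k, y (τ l)⟫ * ∑ f : Fin p → Fin n,
            ⟪ebasis n (f (σ k)), ebasis n (f l)⟫ *
            ((∏ i ∈ univ.erase k, ⟪x i, ebasis n (f (σ i))⟫) *
             (∏ j ∈ univ.erase l, ⟪ebasis n (f j), y (τ j)⟫))) := by
    intro σ τ k l
    have hf1 : ∀ f : Fin p → Fin n,
        (∑ α, sgn σ * sgn τ *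
          (E α (x k) (ebasis n (f (σ k))) * E α (ebasis n (f l)) (y (τ l))) *
          ((∏ i ∈ univ.erase k, ⟪x i, ebasis n (f (σ i))⟫) *
           (∏ j ∈ univ.erase l, ⟪ebasis n (f j), y (τ j)⟫)))
        = sgn σ * sgn τ *
          ((⟪x k, ebasis n (f l)⟫ * ⟪ebasis n (f (σ k)), y (τ l)⟫
            - ⟪x k, y (τ l)⟫ * ⟪ebasis n (f (σ k)), ebasis n (f l)⟫) *
          ((∏ i ∈ univ.erase k, ⟪x i, ebasis n (f (σ i))⟫) *
           (∏ j ∈ univ.erase l, ⟪ebasis n (f j), y (τ j)⟫))) := by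
      intro f
      rw [← Finset.sum_mul, ← Finset.mul_sum, hstar]
      ring
    rw [Finset.sum_congr rfl fun f _ => hf1 f, ← Finset.mul_sum]
    rw [show (∑ f : Fin p → Fin n,
        (⟪x k, ebasis n (f l)⟫ * ⟪ebasis n (f (σ k)), y (τ l)⟫
          - ⟪x k, y (τ l)⟫ * ⟪ebasis n (f (σ k)), ebasis n (f l)⟫) *
        ((∏ i ∈ univ.erase k, ⟪x i, ebasis n (f (σ i))⟫) *
         (∏ j ∈ univ.erase l, ⟪ebasis n (f j), y (τ j)⟫)))
      = (∑ f : Fin p → Fin n,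
          (⟪x k, ebasis n (f l)⟫ * ⟪ebasis n (f (σ k)), y (τ l)⟫) *
          ((∏ i ∈ univ.erase k, ⟪x i, ebasis n (f (σ i))⟫) *
           (∏ j ∈ univ.erase l, ⟪ebasis n (f j), y (τ j)⟫)))
        - ⟪x k, y (τ l)⟫ * ∑ f : Fin p → Fin n,
            ⟪ebasis n (f (σ k)), ebasis n (f l)⟫ *
            ((∏ i ∈ univ.erase k, ⟪x i, ebasis n (f (σ i))⟫) *
             (∏ j ∈ univ.erase l, ⟪ebasis n (f j), y (τ j)⟫)) from by
      rw [Finset.mul_sum, ← Finset.sum_sub_distrib]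
      exact Finset.sum_congr rfl fun f _ => by ring]
    rw [mul_sub]
  rw [Finset.sum_congr rfl fun σ _ => Finset.sum_congr rfl fun τ _ =>
    Finset.sum_congr rfl fun k _ => Finset.sum_congr rfl fun l _ => hfa σ τ k l]
  -- Step 4: split the l-sum at l = σ k and evaluate the f-sums
  have hG : ∀ (σ τ : Perm (Fin p)) (k : Fin p),
      (∑ l, (sgn σ * sgn τ * (∑ f : Fin p → Fin n,
            (⟪x k, ebasis n (f l)⟫ * ⟪ebasis n (f (σ k)), y (τ l)⟫) *
            ((∏ i ∈ univ.erase k, ⟪x i, ebasis n (f (σ i))⟫) *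
             (∏ j ∈ univ.erase l, ⟪ebasis n (f j), y (τ j)⟫)))
        - sgn σ * sgn τ * (⟪x k, y (τ l)⟫ * ∑ f : Fin p → Fin n,
            ⟪ebasis n (f (σ k)), ebasis n (f l)⟫ *
            ((∏ i ∈ univ.erase k, ⟪x i, ebasis n (f (σ i))⟫) *
             (∏ j ∈ univ.erase l, ⟪ebasis n (f j), y (τ j)⟫)))))
      = (1 - (n : ℝ)) * (sgn σ * sgn τ * ∏ m, ⟪x (σ⁻¹ m), y (τ m)⟫)
        + ∑ l ∈ univ.erase (σ k),
            (sgn σ * sgn τ * ((⟪x k, x (σ⁻¹ l)⟫ * ⟪y (τ l), y (τ (σ k))⟫) *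
                ∏ m ∈ (univ.erase (σ k)).erase l, ⟪x (σ⁻¹ m), y (τ m)⟫)
             - sgn σ * sgn τ * (⟪x k, y (τ l)⟫ * (⟪x (σ⁻¹ l), y (τ (σ k))⟫ *
                ∏ m ∈ (univ.erase (σ k)).erase l, ⟪x (σ⁻¹ m), y (τ m)⟫))) := by
    intro σ τ k
    rw [← Finset.add_sum_erase univ _ (Finset.mem_univ (σ k))]
    congr 1
    · rw [caseA1 x y σ τ k, caseB1 x y σ τ k]
      have hV : ⟪x k, y (τ (σ k))⟫ *
          ((n : ℝ) * ∏ m ∈ univ.erase (σ k), ⟪x (σ⁻¹ m), y (τ m)⟫)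
          = (n : ℝ) * ∏ m, ⟪x (σ⁻¹ m), y (τ m)⟫ := by
        rw [← Finset.mul_prod_erase univ (fun m => ⟪x (σ⁻¹ m), y (τ m)⟫)
          (Finset.mem_univ (σ k)), Perm.inv_apply_self]
        ring
      rw [hV]
      ring
    · refine Finset.sum_congr rfl fun l hl => ?_
      have hl' : l ≠ σ k := (Finset.mem_erase.mp hl).1
      rw [caseA2 x y σ τ k l hl', caseB2 x y σ τ k l hl']
  rw [Finset.sum_congr rfl fun σ _ => Finset.sum_congr rfl fun τ _ =>
    Finset.sum_congr rfl fun k _ => hG σ τ k]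
  -- Step 5: distribute the sums
  simp only [Finset.sum_add_distrib, Finset.sum_sub_distrib]
  -- Step 6: the three pieces
  have part1 : ∑ σ : Perm (Fin p), ∑ τ : Perm (Fin p), ∑ _k : Fin p,
      (1 - (n : ℝ)) * (sgn σ * sgn τ * ∏ m, ⟪x (σ⁻¹ m), y (τ m)⟫)
      = (1 - (n : ℝ)) * ((p : ℝ) * ((p.factorial : ℝ) * DgK n p x y)) := by
    have h1 : ∀ σ τ : Perm (Fin p), ∑ _k : Fin p,
        (1 - (n : ℝ)) * (sgn σ * sgn τ * ∏ m, ⟪x (σ⁻¹ m), y (τ m)⟫)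
        = ((1 - (n : ℝ)) * (p : ℝ)) * (sgn σ * sgn τ * ∏ m, ⟪x (σ⁻¹ m), y (τ m)⟫) := by
      intro σ τ
      rw [Finset.sum_const, Finset.card_univ, Fintype.card_fin, nsmul_eq_mul]
      ring
    rw [Finset.sum_congr rfl fun σ _ => Finset.sum_congr rfl fun τ _ => h1 σ τ]
    rw [Finset.sum_congr rfl fun σ _ => (Finset.mul_sum _ _ _).symm, ← Finset.mul_sum, RED]
    ring
  have part2A : ∑ σ : Perm (Fin p), ∑ τ : Perm (Fin p), ∑ k : Fin p,
      ∑ l ∈ univ.erase (σ k),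
        sgn σ * sgn τ * ((⟪x k, x (σ⁻¹ l)⟫ * ⟪y (τ l), y (τ (σ k))⟫) *
          ∏ m ∈ (univ.erase (σ k)).erase l, ⟪x (σ⁻¹ m), y (τ m)⟫)
      = 0 := by
    rw [Finset.sum_comm]
    rw [Finset.sum_congr rfl fun τ _ => part2A_zero x y τ]
    simp
  have part2B : ∑ σ : Perm (Fin p), ∑ τ : Perm (Fin p), ∑ k : Fin p,
      ∑ l ∈ univ.erase (σ k),
        sgn σ * sgn τ * (⟪x k, y (τ l)⟫ * (⟪x (σ⁻¹ l), y (τ (σ k))⟫ *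
          ∏ m ∈ (univ.erase (σ k)).erase l, ⟪x (σ⁻¹ m), y (τ m)⟫))
      = (p.factorial : ℝ) * ((p : ℝ) * (((p - 1 : ℕ) : ℝ) * (- DgK n p x y))) := by
    have hswap : ∀ σ : Perm (Fin p),
        (∑ τ : Perm (Fin p), ∑ k : Fin p, ∑ l ∈ univ.erase (σ k),
          sgn σ * sgn τ * (⟪x k, y (τ l)⟫ * (⟪x (σ⁻¹ l), y (τ (σ k))⟫ *
            ∏ m ∈ (univ.erase (σ k)).erase l, ⟪x (σ⁻¹ m), y (τ m)⟫)))
        = ∑ k : Fin p, ∑ l ∈ univ.erase (σ k), ∑ τ : Perm (Fin p),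
          sgn σ * sgn τ * (⟪x k, y (τ l)⟫ * (⟪x (σ⁻¹ l), y (τ (σ k))⟫ *
            ∏ m ∈ (univ.erase (σ k)).erase l, ⟪x (σ⁻¹ m), y (τ m)⟫)) := by
      intro σ
      rw [Finset.sum_comm]
      exact Finset.sum_congr rfl fun k _ => Finset.sum_comm
    rw [Finset.sum_congr rfl fun σ _ => hswap σ]
    have hins : ∀ (σ : Perm (Fin p)) (k : Fin p),
        (∑ l ∈ univ.erase (σ k), ∑ τ : Perm (Fin p),
          sgn σ * sgn τ * (⟪x k, y (τ l)⟫ * (⟪x (σ⁻¹ l), y (τ (σ k))⟫ *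
            ∏ m ∈ (univ.erase (σ k)).erase l, ⟪x (σ⁻¹ m), y (τ m)⟫)))
        = ((p - 1 : ℕ) : ℝ) * (- DgK n p x y) := by
      intro σ k
      rw [Finset.sum_congr rfl fun l hl =>
        tau_sum_B2 x y σ k l (Finset.mem_erase.mp hl).1]
      rw [Finset.sum_const, Finset.card_erase_of_mem (Finset.mem_univ _),
        Finset.card_univ, Fintype.card_fin, nsmul_eq_mul]
    rw [Finset.sum_congr rfl fun σ _ => Finset.sum_congr rfl fun k _ => hins σ k]
    rw [Finset.sum_congr rfl fun σ _ => Finset.sum_const _]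
    rw [Finset.sum_const, Finset.card_univ, Fintype.card_perm, Fintype.card_fin,
      Finset.card_univ, Fintype.card_fin]
    simp only [nsmul_eq_mul]
  rw [part1, part2A, part2B]
  ring

end St19

/-- For an orthonormal basis `(E_i)` of `Λ²V*` (`N = n(n−1)/2`):
`−∑_{i=1}^{N} (g^{p−1}ρ(E_i)/(p−1)!)∘(g^{p−1}ρ(E_i)/(p−1)!) = p(n−p) gᵖ/p!`. -/
theorem statement19 (n p : ℕ) (hp : p ≤ n)
    (E : Fin (n * (n - 1) / 2) → (Evec n → Evec n → ℝ))
    (hE : ∀ α, IsAltBilin (E α))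
    (hON : ∀ α β, inner2 (E α) (E β) = if α = β then 1 else 0)
    (hCompl : ∀ θ : Evec n → Evec n → ℝ, IsAltBilin θ →
      ∀ x y, θ x y = ∑ α, inner2 θ (E α) * E α x y) :
    -(∑ α, comp (gPowRho p (E α)) (gPowRho p (E α))) =
      ((p * (n - p) : ℕ) : ℝ) • (((p.factorial : ℝ))⁻¹ • gpow n p) := by
  have hstar := St19.star_sum E hE hCompl
  funext x y
  simp only [Pi.neg_apply, Pi.smul_apply, Finset.sum_apply, smul_eq_mul, comp]
  simp only [St19.gPowRho_eq]
  rw [← Finset.mul_sum]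
  rw [St19.main_sum E hstar x y]
  rw [St19.gpow_eq p x y]
  have hc : (p : ℝ) * ((p - 1 : ℕ) : ℝ) = (p : ℝ) * (p : ℝ) - (p : ℝ) := by
    cases p with
    | zero => simp
    | succ q => push_cast [Nat.succ_sub_one]; ring
  have hnp : ((p * (n - p) : ℕ) : ℝ) = (p : ℝ) * ((n : ℝ) - (p : ℝ)) := by
    push_cast [Nat.cast_sub hp]; ring
  have hfac : (p.factorial : ℝ) ≠ 0 := by positivity
  rw [hnp, hc]
  field_simp
  ring
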